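/- For every charged r-multipartition (λ•, s), with d = Res_ℓ(λ•, s), one has 2·Σ_{j=1}^r d_{s_j} ≥ Σ_{i∈ℤ/ℓℤ} (d_i − d_{i+1})²; moreover Σ_{i∈ℤ/ℓℤ}(d_i − d_{i+1})² is even, so the weight Ω_ℓ(λ•, s) is a non-negative integer. -/

import Mathlib

/-- A partition: a non-increasing function `ℕ → ℕ` that is eventually zero. -/
def IsPartition (f : ℕ → ℕ) : Prop :=
  (∀ m n : ℕ, m ≤ n → f n ≤ f m) ∧ ∃ N : ℕ, ∀ n : ℕ, N ≤ n → f n = 0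

/-- The Young diagram of `f`: the set of pairs `(a,b)` with `a < f b`. -/
def young (f : ℕ → ℕ) : Set (ℕ × ℕ) := {p : ℕ × ℕ | p.1 < f p.2}

/-- A node `p` of `f` is removable if deleting it leaves the Young diagram of a
partition. -/
def IsRemovable (f : ℕ → ℕ) (p : ℕ × ℕ) : Prop :=
  p ∈ young f ∧ ∃ g : ℕ → ℕ, IsPartition g ∧ young g = young f \ {p}

/-- A pair `p ∉ Y(f)` is an addable node if adding it gives the Young diagram of
a partition. -/
def IsAddable (f : ℕ → ℕ) (p : ℕ × ℕ) : Prop :=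
  p ∉ young f ∧ ∃ g : ℕ → ℕ, IsPartition g ∧ young g = young f ∪ {p}

/-- The residue `b - a + k ∈ ℤ/ℓℤ` of a node `p = (a,b)` with charge `k`. -/
def nodeRes (ℓ : ℕ) (k : ZMod ℓ) (p : ℕ × ℕ) : ZMod ℓ :=
  (p.2 : ZMod ℓ) - (p.1 : ZMod ℓ) + k

/-- Nodes `(a,b,c)` of an `r`-multipartition: `a < λ^c_b`. -/
def mNodes {r : ℕ} (Λ : Fin r → ℕ → ℕ) : Set (ℕ × ℕ × Fin r) :=
  {q : ℕ × ℕ × Fin r | q.1 < Λ q.2.2 q.2.1}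

/-- The residue vector: `(mRes ℓ Λ s i)` is the number of nodes of `Λ` of
residue `i` with respect to the multicharge `s`. -/
noncomputable def mRes (ℓ : ℕ) {r : ℕ} (Λ : Fin r → ℕ → ℕ) (s : Fin r → ZMod ℓ) (i : ZMod ℓ) : ℤ :=
  ((mNodes Λ ∩ {q : ℕ × ℕ × Fin r | nodeRes ℓ (s q.2.2) (q.1, q.2.1) = i}).ncard : ℤ)

/-- `wMulti ℓ s i = #{j | s_j = i}`. -/
def wMulti (ℓ : ℕ) {r : ℕ} (s : Fin r → ZMod ℓ) (i : ZMod ℓ) : ℤ :=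
  ((Finset.univ.filter fun j : Fin r => s j = i).card : ℤ)

/-- The hub: number of removable `i`-nodes minus number of addable `i`-nodes. -/
noncomputable def hub (ℓ : ℕ) {r : ℕ} (Λ : Fin r → ℕ → ℕ) (s : Fin r → ZMod ℓ) (i : ZMod ℓ) : ℤ :=
  (({q : ℕ × ℕ × Fin r | IsRemovable (Λ q.2.2) (q.1, q.2.1) ∧
      nodeRes ℓ (s q.2.2) (q.1, q.2.1) = i}).ncard : ℤ) -
  (({q : ℕ × ℕ × Fin r | IsAddable (Λ q.2.2) (q.1, q.2.1) ∧
      nodeRes ℓ (s q.2.2) (q.1, q.2.1) = i}).ncard : ℤ)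

namespace Stmt9

open Finset

open Finset

def diagF (N : ℕ) (f : ℕ → ℕ) (k : ℤ) : Finset (ℕ × ℕ) :=
  (Finset.range N ×ˢ Finset.range N).filter
    (fun p => p.1 < f p.2 ∧ (p.2 : ℤ) - (p.1 : ℤ) = k)

def diagCt (N : ℕ) (f : ℕ → ℕ) (k : ℤ) : ℤ := ((diagF N f k).card : ℤ)

noncomputable def resCt (ℓ : ℕ) (M : ℕ) (s : ZMod ℓ) (n : ℤ → ℤ) (i : ZMod ℓ) : ℤ :=
  ∑ k ∈ Finset.Icc (-(M:ℤ)) (M:ℤ), if ((k : ZMod ℓ) + s = i) then n k else 0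

lemma mem_diagF {N : ℕ} {f : ℕ → ℕ} {k : ℤ} {a b : ℕ} :
    (a, b) ∈ diagF N f k ↔ a < N ∧ b < N ∧ a < f b ∧ (b:ℤ) - (a:ℤ) = k := by
  simp only [diagF, Finset.mem_filter, Finset.mem_product, Finset.mem_range]
  tauto

lemma diagCt_nonneg {N : ℕ} {f : ℕ → ℕ} {k : ℤ} : 0 ≤ diagCt N f k := Int.natCast_nonneg _

lemma diagCt_zero {N : ℕ} {f : ℕ → ℕ} {k : ℤ} (hk : (N:ℤ) ≤ k ∨ k ≤ -(N:ℤ)) :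
    diagCt N f k = 0 := by
  have h : diagF N f k = ∅ := by
    rw [Finset.eq_empty_iff_forall_notMem]
    rintro ⟨a, b⟩ hp
    rw [mem_diagF] at hp
    omega
  simp [diagCt, h]

lemma sum_tele (f : ℤ → ℤ) (a : ℤ) : ∀ b : ℤ, a - 1 ≤ b →
    ∑ k ∈ Finset.Icc a b, (f k - f (k + 1)) = f a - f (b + 1) := by
  intro b hb
  refine Int.le_induction
    (motive := fun b _ => ∑ k ∈ Finset.Icc a b, (f k - f (k + 1)) = f a - f (b + 1)) ?_ ?_ b hb
  · show ∑ k ∈ Finset.Icc a (a - 1), (f k - f (k + 1)) = f a - f (a - 1 + 1)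
    rw [show a - 1 + 1 = a by ring, Finset.Icc_eq_empty (by omega)]
    simp
  · intro b hb ih
    show ∑ k ∈ Finset.Icc a (b + 1), (f k - f (k + 1)) = f a - f (b + 1 + 1)
    have h1 : Finset.Icc a (b + 1) = insert (b + 1) (Finset.Icc a b) := by
      ext x; simp only [Finset.mem_Icc, Finset.mem_insert]; omega
    rw [h1, Finset.sum_insert (by simp only [Finset.mem_Icc]; omega), ih]
    ring

lemma card_filter_le_sum (S : Finset ℤ) (g : ℤ → ℤ) (hg : ∀ k ∈ S, 0 ≤ g k) :
    (((S.filter (fun k => g k = 1)).card : ℤ)) ≤ ∑ k ∈ S, g k := by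
  calc (((S.filter (fun k => g k = 1)).card : ℤ))
      = ∑ k ∈ S.filter (fun k => g k = 1), (1:ℤ) := by simp
    _ = ∑ k ∈ S.filter (fun k => g k = 1), g k :=
        Finset.sum_congr rfl (fun k hk => ((Finset.mem_filter.mp hk).2).symm)
    _ ≤ ∑ k ∈ S, g k :=
        Finset.sum_le_sum_of_subset_of_nonneg (Finset.filter_subset _ _)
          (fun k hk _ => hg k hk)

lemma diagCt_A {N : ℕ} {f : ℕ → ℕ} (hmono : ∀ m n, m ≤ n → f n ≤ f m) {k : ℤ} (hk : 0 ≤ k) :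
    diagCt N f (k+1) ≤ diagCt N f k ∧ diagCt N f k ≤ diagCt N f (k+1) + 1 := by
  constructor
  · refine Int.ofNat_le.mpr (Finset.card_le_card_of_injOn (fun p => (p.1, p.2 - 1)) ?_ ?_)
    · rintro ⟨a, b⟩ hp
      rw [Finset.mem_coe, mem_diagF] at hp
      obtain ⟨h1, h2, h3, h4⟩ := hp
      have hb : 1 ≤ b := by omega
      have hm : f b ≤ f (b - 1) := hmono (b-1) b (by omega)
      show (a, b - 1) ∈ diagF N f k
      rw [mem_diagF]
      omega
    · rintro ⟨a, b⟩ hp ⟨c, d⟩ hq hpq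
      simp only [Finset.mem_coe, mem_diagF] at hp hq
      have hpq' : (a, b - 1) = (c, d - 1) := hpq
      simp only [Prod.mk.injEq] at hpq' ⊢
      omega
  · have h1 : diagF N f k ⊆ insert (0, k.toNat) ((diagF N f k).erase (0, k.toNat)) := by
      intro a ha
      by_cases hax : a = (0, k.toNat)
      · exact hax ▸ Finset.mem_insert_self _ _
      · exact Finset.mem_insert_of_mem (Finset.mem_erase.mpr ⟨hax, ha⟩)
    have h2 : (diagF N f k).card ≤ ((diagF N f k).erase (0, k.toNat)).card + 1 :=
      le_trans (Finset.card_le_card h1) (Finset.card_insert_le _ _)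
    have h3 : ((diagF N f k).erase (0, k.toNat)).card ≤ (diagF N f (k+1)).card := by
      refine Finset.card_le_card_of_injOn (fun p => (p.1 - 1, p.2)) ?_ ?_
      · rintro ⟨a, b⟩ hp
        obtain ⟨hpx, hpm⟩ := Finset.mem_erase.mp hp
        rw [mem_diagF] at hpm
        obtain ⟨h1', h2', h3', h4'⟩ := hpm
        have ha : 1 ≤ a := by
          by_contra h0
          exact hpx (by simp only [Prod.mk.injEq]; omega)
        show (a - 1, b) ∈ diagF N f (k+1)
        rw [mem_diagF]
        omega
      · rintro ⟨a, b⟩ hp ⟨c, d⟩ hq hpq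
        obtain ⟨hpx, hpm⟩ := Finset.mem_erase.mp (Finset.mem_coe.mp hp)
        obtain ⟨hqx, hqm⟩ := Finset.mem_erase.mp (Finset.mem_coe.mp hq)
        rw [mem_diagF] at hpm hqm
        have ha : 1 ≤ a := by
          by_contra h0
          exact hpx (by simp only [Prod.mk.injEq]; omega)
        have hc : 1 ≤ c := by
          by_contra h0
          exact hqx (by simp only [Prod.mk.injEq]; omega)
        have hpq' : (a - 1, b) = (c - 1, d) := hpq
        simp only [Prod.mk.injEq] at hpq' ⊢
        omega
    unfold diagCt
    omega

lemma diagCt_B {N : ℕ} {f : ℕ → ℕ} (hmono : ∀ m n, m ≤ n → f n ≤ f m) {k : ℤ} (hk : k < 0) :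
    diagCt N f k ≤ diagCt N f (k+1) ∧ diagCt N f (k+1) ≤ diagCt N f k + 1 := by
  constructor
  · refine Int.ofNat_le.mpr (Finset.card_le_card_of_injOn (fun p => (p.1 - 1, p.2)) ?_ ?_)
    · rintro ⟨a, b⟩ hp
      rw [Finset.mem_coe, mem_diagF] at hp
      show (a - 1, b) ∈ diagF N f (k+1)
      rw [mem_diagF]
      omega
    · rintro ⟨a, b⟩ hp ⟨c, d⟩ hq hpq
      simp only [Finset.mem_coe, mem_diagF] at hp hq
      have hpq' : (a - 1, b) = (c - 1, d) := hpq
      simp only [Prod.mk.injEq] at hpq' ⊢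
      omega
  · have h1 : diagF N f (k+1) ⊆
        insert ((-(k+1)).toNat, 0) ((diagF N f (k+1)).erase ((-(k+1)).toNat, 0)) := by
      intro a ha
      by_cases hax : a = ((-(k+1)).toNat, 0)
      · exact hax ▸ Finset.mem_insert_self _ _
      · exact Finset.mem_insert_of_mem (Finset.mem_erase.mpr ⟨hax, ha⟩)
    have h2 : (diagF N f (k+1)).card ≤
        ((diagF N f (k+1)).erase ((-(k+1)).toNat, 0)).card + 1 :=
      le_trans (Finset.card_le_card h1) (Finset.card_insert_le _ _)
    have h3 : ((diagF N f (k+1)).erase ((-(k+1)).toNat, 0)).card ≤ (diagF N f k).card := by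
      refine Finset.card_le_card_of_injOn (fun p => (p.1, p.2 - 1)) ?_ ?_
      · rintro ⟨a, b⟩ hp
        obtain ⟨hpx, hpm⟩ := Finset.mem_erase.mp hp
        rw [mem_diagF] at hpm
        obtain ⟨h1', h2', h3', h4'⟩ := hpm
        have hb : 1 ≤ b := by
          by_contra h0
          exact hpx (by simp only [Prod.mk.injEq]; omega)
        have hm : f b ≤ f (b - 1) := hmono (b-1) b (by omega)
        show (a, b - 1) ∈ diagF N f k
        rw [mem_diagF]
        omega
      · rintro ⟨a, b⟩ hp ⟨c, d⟩ hq hpq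
        obtain ⟨hpx, hpm⟩ := Finset.mem_erase.mp (Finset.mem_coe.mp hp)
        obtain ⟨hqx, hqm⟩ := Finset.mem_erase.mp (Finset.mem_coe.mp hq)
        rw [mem_diagF] at hpm hqm
        have hb : 1 ≤ b := by
          by_contra h0
          exact hpx (by simp only [Prod.mk.injEq]; omega)
        have hd : 1 ≤ d := by
          by_contra h0
          exact hqx (by simp only [Prod.mk.injEq]; omega)
        have hpq' : (a, b - 1) = (c, d - 1) := hpq
        simp only [Prod.mk.injEq] at hpq' ⊢
        omega
    unfold diagCt
    omega

lemma resCt_sub (ℓ : ℕ) [NeZero ℓ] (M : ℕ) (s : ZMod ℓ) (n : ℤ → ℤ)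
    (hz : ∀ k : ℤ, (M:ℤ) ≤ k ∨ k ≤ -(M:ℤ) → n k = 0) (i : ZMod ℓ) :
    resCt ℓ M s n i - resCt ℓ M s n (i+1) =
      ∑ k ∈ Finset.Icc (-(M:ℤ)-1) (M:ℤ),
        if ((k:ZMod ℓ) + s = i) then (n k - n (k+1)) else 0 := by
  have e1 : resCt ℓ M s n i =
      ∑ k ∈ Finset.Icc (-(M:ℤ)-1) (M:ℤ), if ((k:ZMod ℓ) + s = i) then n k else 0 := by
    rw [resCt]
    apply Finset.sum_subset
    · apply Finset.Icc_subset_Icc_left; omega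
    · intro x hx hnx
      simp only [Finset.mem_Icc] at hx hnx
      rw [hz x (by omega)]
      simp
  have e2 : resCt ℓ M s n (i+1) =
      ∑ k ∈ Finset.Icc (-(M:ℤ)-1) (M:ℤ), if ((k:ZMod ℓ) + s = i) then n (k+1) else 0 := by
    rw [resCt]
    have sh : ∑ k ∈ Finset.Icc (-(M:ℤ)-1) ((M:ℤ)-1), (if ((k:ZMod ℓ) + s = i) then n (k+1) else 0)
        = ∑ j ∈ Finset.Icc (-(M:ℤ)) (M:ℤ), (if ((j:ZMod ℓ) + s = i+1) then n j else 0) := by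
      refine Finset.sum_bij' (fun k _ => k + 1) (fun j _ => j - 1) ?_ ?_ ?_ ?_ ?_
      · intro a ha; simp only [Finset.mem_Icc] at ha ⊢; omega
      · intro a ha; simp only [Finset.mem_Icc] at ha ⊢; omega
      · intro a _; ring
      · intro a _; ring
      · intro a _
        refine if_congr ?_ rfl rfl
        push_cast
        constructor <;> intro h <;> linear_combination h
    rw [← sh]
    apply Finset.sum_subset
    · apply Finset.Icc_subset_Icc_right; omega
    · intro x hx hnx
      simp only [Finset.mem_Icc] at hx hnx
      rw [hz (x+1) (by omega)]
      simp
  rw [e1, e2, ← Finset.sum_sub_distrib]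
  exact Finset.sum_congr rfl fun k _ => by split_ifs <;> simp

lemma sum_resid_mul (ℓ : ℕ) [NeZero ℓ] (R R' : Finset ℤ) (s t : ZMod ℓ) (u v : ℤ → ℤ) :
    ∑ i : ZMod ℓ, (∑ k ∈ R, if ((k:ZMod ℓ) + s = i) then u k else 0) *
      (∑ m ∈ R', if ((m:ZMod ℓ) + t = i) then v m else 0)
    = ∑ k ∈ R, ∑ m ∈ R', if ((k:ZMod ℓ) + s = (m:ZMod ℓ) + t) then u k * v m else 0 := by
  have step : ∀ i : ZMod ℓ,
      (∑ k ∈ R, if ((k:ZMod ℓ) + s = i) then u k else 0) *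
        (∑ m ∈ R', if ((m:ZMod ℓ) + t = i) then v m else 0)
      = ∑ k ∈ R, ∑ m ∈ R', (if ((k:ZMod ℓ) + s = i) then u k else 0) *
          (if ((m:ZMod ℓ) + t = i) then v m else 0) :=
    fun i => Finset.sum_mul_sum _ _ _ _
  rw [Finset.sum_congr rfl fun i _ => step i]
  rw [Finset.sum_comm]
  refine Finset.sum_congr rfl fun k _ => ?_
  rw [Finset.sum_comm]
  refine Finset.sum_congr rfl fun m _ => ?_
  rw [Finset.sum_eq_single ((k:ZMod ℓ) + s)]
  · rw [if_pos rfl]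
    by_cases h : (k:ZMod ℓ) + s = (m:ZMod ℓ) + t
    · rw [if_pos h.symm, if_pos h]
    · rw [if_neg (fun hh => h hh.symm), if_neg h, mul_zero]
  · intro b _ hb
    rw [if_neg (fun hh => hb hh.symm), zero_mul]
  · intro h; exact absurd (Finset.mem_univ _) h

lemma key (ℓ : ℕ) [NeZero ℓ] (M : ℕ) (s t : ZMod ℓ) (n n' : ℤ → ℤ)
    (hn0 : ∀ k, 0 ≤ n k) (hn0' : ∀ k, 0 ≤ n' k)
    (hz : ∀ k : ℤ, (M:ℤ) ≤ k ∨ k ≤ -(M:ℤ) → n k = 0)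
    (hz' : ∀ k : ℤ, (M:ℤ) ≤ k ∨ k ≤ -(M:ℤ) → n' k = 0)
    (hA : ∀ k : ℤ, 0 ≤ k → n (k+1) ≤ n k ∧ n k ≤ n (k+1) + 1)
    (hB : ∀ k : ℤ, k < 0 → n k ≤ n (k+1) ∧ n (k+1) ≤ n k + 1)
    (hA' : ∀ k : ℤ, 0 ≤ k → n' (k+1) ≤ n' k ∧ n' k ≤ n' (k+1) + 1)
    (hB' : ∀ k : ℤ, k < 0 → n' k ≤ n' (k+1) ∧ n' (k+1) ≤ n' k + 1) :
    ∑ i : ZMod ℓ, (resCt ℓ M s n i - resCt ℓ M s n (i+1)) *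
      (resCt ℓ M t n' i - resCt ℓ M t n' (i+1)) ≤ resCt ℓ M s n t + resCt ℓ M t n' s := by
  classical
  set R : Finset ℤ := Finset.Icc (-(M:ℤ)-1) (M:ℤ) with hR
  set R2 : Finset ℤ := Finset.Icc (-(2*(M:ℤ)+1)) (2*(M:ℤ)+1) with hR2
  have hδpos : ∀ k : ℤ, n k - n (k+1) = 1 → 0 ≤ k := by
    intro k h; by_contra h0; push_neg at h0; have := hB k h0; omega
  have hδneg : ∀ k : ℤ, n k - n (k+1) = -1 → k < 0 := by
    intro k h; by_contra h0; push_neg at h0; have := hA k h0; omega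
  have hεpos : ∀ k : ℤ, n' k - n' (k+1) = 1 → 0 ≤ k := by
    intro k h; by_contra h0; push_neg at h0; have := hB' k h0; omega
  have hεneg : ∀ k : ℤ, n' k - n' (k+1) = -1 → k < 0 := by
    intro k h; by_contra h0; push_neg at h0; have := hA' k h0; omega
  -- step 1 : expand the LHS as a double sum
  have lhs1 : ∑ i : ZMod ℓ, (resCt ℓ M s n i - resCt ℓ M s n (i+1)) *
      (resCt ℓ M t n' i - resCt ℓ M t n' (i+1))
      = ∑ k ∈ R, ∑ m ∈ R, if ((k:ZMod ℓ) + s = (m:ZMod ℓ) + t)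
          then (n k - n (k+1)) * (n' m - n' (m+1)) else 0 := by
    calc ∑ i : ZMod ℓ, (resCt ℓ M s n i - resCt ℓ M s n (i+1)) *
        (resCt ℓ M t n' i - resCt ℓ M t n' (i+1))
        = ∑ i : ZMod ℓ, (∑ k ∈ R, if ((k:ZMod ℓ) + s = i) then (n k - n (k+1)) else 0) *
            (∑ m ∈ R, if ((m:ZMod ℓ) + t = i) then (n' m - n' (m+1)) else 0) :=
          Finset.sum_congr rfl fun i _ => by
            rw [resCt_sub ℓ M s n hz i, resCt_sub ℓ M t n' hz' i]
      _ = _ := sum_resid_mul ℓ R R s t _ _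
  -- step 2 : pass to the product finset
  have lhs2 : ∑ k ∈ R, ∑ m ∈ R, (if ((k:ZMod ℓ) + s = (m:ZMod ℓ) + t)
          then (n k - n (k+1)) * (n' m - n' (m+1)) else 0)
      = ∑ p ∈ R ×ˢ R, (if ((p.1:ZMod ℓ) + s = (p.2:ZMod ℓ) + t)
          then (n p.1 - n (p.1+1)) * (n' p.2 - n' (p.2+1)) else 0) := by
    rw [Finset.sum_product]
  -- step 3 : pointwise bound
  have ptw : ∀ p ∈ R ×ˢ R,
      (if ((p.1:ZMod ℓ) + s = (p.2:ZMod ℓ) + t)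
          then (n p.1 - n (p.1+1)) * (n' p.2 - n' (p.2+1)) else 0)
      ≤ (if (((p.1:ZMod ℓ) + s = (p.2:ZMod ℓ) + t) ∧ n p.1 - n (p.1+1) = 1 ∧
              n' p.2 - n' (p.2+1) = 1) then (1:ℤ) else 0)
        + (if (((p.1:ZMod ℓ) + s = (p.2:ZMod ℓ) + t) ∧ n p.1 - n (p.1+1) = -1 ∧
              n' p.2 - n' (p.2+1) = -1) then (1:ℤ) else 0) := by
    intro p _
    have hx : n p.1 - n (p.1+1) = -1 ∨ n p.1 - n (p.1+1) = 0 ∨ n p.1 - n (p.1+1) = 1 := by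
      rcases le_or_gt 0 p.1 with h|h
      · have := hA p.1 h; omega
      · have := hB p.1 h; omega
    have hy : n' p.2 - n' (p.2+1) = -1 ∨ n' p.2 - n' (p.2+1) = 0 ∨ n' p.2 - n' (p.2+1) = 1 := by
      rcases le_or_gt 0 p.2 with h|h
      · have := hA' p.2 h; omega
      · have := hB' p.2 h; omega
    by_cases hc : ((p.1:ZMod ℓ) + s = (p.2:ZMod ℓ) + t)
    · rcases hx with h|h|h <;> rcases hy with h'|h'|h' <;> simp [hc, h, h']
    · simp [hc]
  -- step 4 : fiber the two indicator sums over the difference p.1 - p.2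
  have hmaps : ∀ p ∈ R ×ˢ R, p.1 - p.2 ∈ R2 := by
    rintro ⟨k, m⟩ hp
    simp only [Finset.mem_product, hR, Finset.mem_Icc] at hp
    simp only [hR2, Finset.mem_Icc]
    omega
  have fiber1 : ∀ D ∈ R2,
      (∑ p ∈ (R ×ˢ R).filter (fun p : ℤ × ℤ => p.1 - p.2 = D),
        (if (((p.1:ZMod ℓ) + s = (p.2:ZMod ℓ) + t) ∧ n p.1 - n (p.1+1) = 1 ∧
            n' p.2 - n' (p.2+1) = 1) then (1:ℤ) else 0))
      ≤ (if ((D:ZMod ℓ) + s = t) then (if 0 ≤ D then n D else n' (-D)) else 0) := by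
    intro D _
    rw [Finset.sum_boole]
    by_cases hres : (D:ZMod ℓ) + s = t
    · rw [if_pos hres]
      by_cases hD0 : 0 ≤ D
      · rw [if_pos hD0]
        have hcard : (((R ×ˢ R).filter (fun p : ℤ × ℤ => p.1 - p.2 = D)).filter
            (fun p : ℤ × ℤ => ((p.1:ZMod ℓ) + s = (p.2:ZMod ℓ) + t) ∧ n p.1 - n (p.1+1) = 1 ∧
              n' p.2 - n' (p.2+1) = 1)).card
            ≤ ((Finset.Icc D (M:ℤ)).filter (fun k => n k - n (k+1) = 1)).card := by
          refine Finset.card_le_card_of_injOn (fun p => p.1) ?_ ?_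
          · rintro ⟨k, m⟩ hp
            simp only [Finset.mem_coe, Finset.mem_filter, Finset.mem_product, hR, Finset.mem_Icc] at hp
            obtain ⟨⟨⟨⟨hk1, hk2⟩, _, _⟩, hDkm⟩, _, hδ1, hε1⟩ := hp
            have hm0 : 0 ≤ m := hεpos m hε1
            simp only [Finset.mem_coe, Finset.mem_filter, Finset.mem_Icc]
            exact ⟨⟨by omega, by omega⟩, hδ1⟩
          · rintro ⟨k, m⟩ hp ⟨k', m'⟩ hq hpq
            simp only [Finset.mem_coe, Finset.mem_filter] at hp hq
            have e1 : k = k' := hpq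
            have e2 : k - m = D := hp.1.2
            have e3 : k' - m' = D := hq.1.2
            simp only [Prod.mk.injEq]
            omega
        calc ((((R ×ˢ R).filter (fun p : ℤ × ℤ => p.1 - p.2 = D)).filter
            (fun p : ℤ × ℤ => ((p.1:ZMod ℓ) + s = (p.2:ZMod ℓ) + t) ∧ n p.1 - n (p.1+1) = 1 ∧
              n' p.2 - n' (p.2+1) = 1)).card : ℤ)
            ≤ (((Finset.Icc D (M:ℤ)).filter (fun k => n k - n (k+1) = 1)).card : ℤ) :=
              Nat.cast_le.mpr hcard
          _ ≤ ∑ k ∈ Finset.Icc D (M:ℤ), (n k - n (k+1)) :=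
              card_filter_le_sum _ _ (fun k hk => by
                simp only [Finset.mem_Icc] at hk
                have := hA k (by omega); omega)
          _ ≤ n D := by
              rcases le_or_gt D ((M:ℤ)+1) with h|h
              · rw [sum_tele n D (M:ℤ) (by omega), hz ((M:ℤ)+1) (by omega)]
                omega
              · rw [Finset.Icc_eq_empty (by omega), Finset.sum_empty]
                exact hn0 D
      · rw [if_neg hD0]
        have hcard : (((R ×ˢ R).filter (fun p : ℤ × ℤ => p.1 - p.2 = D)).filter
            (fun p : ℤ × ℤ => ((p.1:ZMod ℓ) + s = (p.2:ZMod ℓ) + t) ∧ n p.1 - n (p.1+1) = 1 ∧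
              n' p.2 - n' (p.2+1) = 1)).card
            ≤ ((Finset.Icc (-D) (M:ℤ)).filter (fun k => n' k - n' (k+1) = 1)).card := by
          refine Finset.card_le_card_of_injOn (fun p => p.2) ?_ ?_
          · rintro ⟨k, m⟩ hp
            simp only [Finset.mem_coe, Finset.mem_filter, Finset.mem_product, hR, Finset.mem_Icc] at hp
            obtain ⟨⟨⟨⟨hk1, hk2⟩, hm1, hm2⟩, hDkm⟩, _, hδ1, hε1⟩ := hp
            have hk0 : 0 ≤ k := hδpos k hδ1
            simp only [Finset.mem_coe, Finset.mem_filter, Finset.mem_Icc]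
            exact ⟨⟨by omega, by omega⟩, hε1⟩
          · rintro ⟨k, m⟩ hp ⟨k', m'⟩ hq hpq
            simp only [Finset.mem_coe, Finset.mem_filter] at hp hq
            have e1 : m = m' := hpq
            have e2 : k - m = D := hp.1.2
            have e3 : k' - m' = D := hq.1.2
            simp only [Prod.mk.injEq]
            omega
        calc ((((R ×ˢ R).filter (fun p : ℤ × ℤ => p.1 - p.2 = D)).filter
            (fun p : ℤ × ℤ => ((p.1:ZMod ℓ) + s = (p.2:ZMod ℓ) + t) ∧ n p.1 - n (p.1+1) = 1 ∧
              n' p.2 - n' (p.2+1) = 1)).card : ℤ)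
            ≤ (((Finset.Icc (-D) (M:ℤ)).filter (fun k => n' k - n' (k+1) = 1)).card : ℤ) :=
              Nat.cast_le.mpr hcard
          _ ≤ ∑ k ∈ Finset.Icc (-D) (M:ℤ), (n' k - n' (k+1)) :=
              card_filter_le_sum _ _ (fun k hk => by
                simp only [Finset.mem_Icc] at hk
                have := hA' k (by omega); omega)
          _ ≤ n' (-D) := by
              rcases le_or_gt (-D) ((M:ℤ)+1) with h|h
              · rw [sum_tele n' (-D) (M:ℤ) (by omega), hz' ((M:ℤ)+1) (by omega)]
                omega
              · rw [Finset.Icc_eq_empty (by omega), Finset.sum_empty]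
                exact hn0' (-D)
    · rw [if_neg hres]
      have hempty : (((R ×ˢ R).filter (fun p : ℤ × ℤ => p.1 - p.2 = D)).filter
          (fun p : ℤ × ℤ => ((p.1:ZMod ℓ) + s = (p.2:ZMod ℓ) + t) ∧ n p.1 - n (p.1+1) = 1 ∧
            n' p.2 - n' (p.2+1) = 1)) = ∅ := by
        rw [Finset.eq_empty_iff_forall_notMem]
        rintro ⟨k, m⟩ hp
        simp only [Finset.mem_filter] at hp
        obtain ⟨⟨_, hDkm⟩, hcond, _, _⟩ := hp
        apply hres
        have : ((D:ℤ) : ZMod ℓ) = ((k - m : ℤ) : ZMod ℓ) := by rw [hDkm]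
        push_cast at this
        rw [this]
        linear_combination hcond
      rw [hempty]
      simp
  have fiber2 : ∀ D ∈ R2,
      (∑ p ∈ (R ×ˢ R).filter (fun p : ℤ × ℤ => p.1 - p.2 = D),
        (if (((p.1:ZMod ℓ) + s = (p.2:ZMod ℓ) + t) ∧ n p.1 - n (p.1+1) = -1 ∧
            n' p.2 - n' (p.2+1) = -1) then (1:ℤ) else 0))
      ≤ (if ((D:ZMod ℓ) + s = t) then (if 0 ≤ D then n' (-D) else n D) else 0) := by
    intro D _
    rw [Finset.sum_boole]
    by_cases hres : (D:ZMod ℓ) + s = t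
    · rw [if_pos hres]
      by_cases hD0 : 0 ≤ D
      · rw [if_pos hD0]
        have hcard : (((R ×ˢ R).filter (fun p : ℤ × ℤ => p.1 - p.2 = D)).filter
            (fun p : ℤ × ℤ => ((p.1:ZMod ℓ) + s = (p.2:ZMod ℓ) + t) ∧ n p.1 - n (p.1+1) = -1 ∧
              n' p.2 - n' (p.2+1) = -1)).card
            ≤ ((Finset.Icc (-(M:ℤ)-1) (-D-1)).filter
                (fun k => (-(n' k)) - (-(n' (k+1))) = 1)).card := by
          refine Finset.card_le_card_of_injOn (fun p => p.2) ?_ ?_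
          · rintro ⟨k, m⟩ hp
            simp only [Finset.mem_coe, Finset.mem_filter, Finset.mem_product, hR, Finset.mem_Icc] at hp
            obtain ⟨⟨⟨⟨hk1, hk2⟩, hm1, hm2⟩, hDkm⟩, _, hδ1, hε1⟩ := hp
            have hk0 : k < 0 := hδneg k hδ1
            simp only [Finset.mem_coe, Finset.mem_filter, Finset.mem_Icc]
            exact ⟨⟨by omega, by omega⟩, by omega⟩
          · rintro ⟨k, m⟩ hp ⟨k', m'⟩ hq hpq
            simp only [Finset.mem_coe, Finset.mem_filter] at hp hq
            have e1 : m = m' := hpq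
            have e2 : k - m = D := hp.1.2
            have e3 : k' - m' = D := hq.1.2
            simp only [Prod.mk.injEq]
            omega
        calc ((((R ×ˢ R).filter (fun p : ℤ × ℤ => p.1 - p.2 = D)).filter
            (fun p : ℤ × ℤ => ((p.1:ZMod ℓ) + s = (p.2:ZMod ℓ) + t) ∧ n p.1 - n (p.1+1) = -1 ∧
              n' p.2 - n' (p.2+1) = -1)).card : ℤ)
            ≤ (((Finset.Icc (-(M:ℤ)-1) (-D-1)).filter
                (fun k => (-(n' k)) - (-(n' (k+1))) = 1)).card : ℤ) :=
              Nat.cast_le.mpr hcard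
          _ ≤ ∑ k ∈ Finset.Icc (-(M:ℤ)-1) (-D-1), ((-(n' k)) - (-(n' (k+1)))) :=
              card_filter_le_sum _ _ (fun k hk => by
                simp only [Finset.mem_Icc] at hk
                have := hB' k (by omega); omega)
          _ ≤ n' (-D) := by
              rcases le_or_gt D ((M:ℤ)+1) with h|h
              · rw [sum_tele (fun k => -(n' k)) (-(M:ℤ)-1) (-D-1) (by omega)]
                rw [show (-D-1+1 : ℤ) = -D from by ring]
                have h1 : n' (-(M:ℤ)-1) = 0 := hz' _ (by omega)
                show -(n' (-(M:ℤ)-1)) - -(n' (-D)) ≤ n' (-D)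
                omega
              · rw [Finset.Icc_eq_empty (by omega), Finset.sum_empty]
                exact hn0' (-D)
      · rw [if_neg hD0]
        have hcard : (((R ×ˢ R).filter (fun p : ℤ × ℤ => p.1 - p.2 = D)).filter
            (fun p : ℤ × ℤ => ((p.1:ZMod ℓ) + s = (p.2:ZMod ℓ) + t) ∧ n p.1 - n (p.1+1) = -1 ∧
              n' p.2 - n' (p.2+1) = -1)).card
            ≤ ((Finset.Icc (-(M:ℤ)-1) (D-1)).filter
                (fun k => (-(n k)) - (-(n (k+1))) = 1)).card := by
          refine Finset.card_le_card_of_injOn (fun p => p.1) ?_ ?_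
          · rintro ⟨k, m⟩ hp
            simp only [Finset.mem_coe, Finset.mem_filter, Finset.mem_product, hR, Finset.mem_Icc] at hp
            obtain ⟨⟨⟨⟨hk1, hk2⟩, hm1, hm2⟩, hDkm⟩, _, hδ1, hε1⟩ := hp
            have hm0 : m < 0 := hεneg m hε1
            simp only [Finset.mem_coe, Finset.mem_filter, Finset.mem_Icc]
            exact ⟨⟨by omega, by omega⟩, by omega⟩
          · rintro ⟨k, m⟩ hp ⟨k', m'⟩ hq hpq
            simp only [Finset.mem_coe, Finset.mem_filter] at hp hq
            have e1 : k = k' := hpq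
            have e2 : k - m = D := hp.1.2
            have e3 : k' - m' = D := hq.1.2
            simp only [Prod.mk.injEq]
            omega
        calc ((((R ×ˢ R).filter (fun p : ℤ × ℤ => p.1 - p.2 = D)).filter
            (fun p : ℤ × ℤ => ((p.1:ZMod ℓ) + s = (p.2:ZMod ℓ) + t) ∧ n p.1 - n (p.1+1) = -1 ∧
              n' p.2 - n' (p.2+1) = -1)).card : ℤ)
            ≤ (((Finset.Icc (-(M:ℤ)-1) (D-1)).filter
                (fun k => (-(n k)) - (-(n (k+1))) = 1)).card : ℤ) :=
              Nat.cast_le.mpr hcard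
          _ ≤ ∑ k ∈ Finset.Icc (-(M:ℤ)-1) (D-1), ((-(n k)) - (-(n (k+1)))) :=
              card_filter_le_sum _ _ (fun k hk => by
                simp only [Finset.mem_Icc] at hk
                have := hB k (by omega); omega)
          _ ≤ n D := by
              rcases le_or_gt (-(M:ℤ)-1) D with h|h
              · rw [sum_tele (fun k => -(n k)) (-(M:ℤ)-1) (D-1) (by omega)]
                rw [show (D-1+1 : ℤ) = D from by ring]
                have h1 : n (-(M:ℤ)-1) = 0 := hz _ (by omega)
                show -(n (-(M:ℤ)-1)) - -(n D) ≤ n D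
                omega
              · rw [Finset.Icc_eq_empty (by omega), Finset.sum_empty]
                exact hn0 D
    · rw [if_neg hres]
      have hempty : (((R ×ˢ R).filter (fun p : ℤ × ℤ => p.1 - p.2 = D)).filter
          (fun p : ℤ × ℤ => ((p.1:ZMod ℓ) + s = (p.2:ZMod ℓ) + t) ∧ n p.1 - n (p.1+1) = -1 ∧
            n' p.2 - n' (p.2+1) = -1)) = ∅ := by
        rw [Finset.eq_empty_iff_forall_notMem]
        rintro ⟨k, m⟩ hp
        simp only [Finset.mem_filter] at hp
        obtain ⟨⟨_, hDkm⟩, hcond, _, _⟩ := hp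
        apply hres
        have : ((D:ℤ) : ZMod ℓ) = ((k - m : ℤ) : ZMod ℓ) := by rw [hDkm]
        push_cast at this
        rw [this]
        linear_combination hcond
      rw [hempty]
      simp
  -- step 5 : assemble
  have hT1 : ∑ p ∈ R ×ˢ R,
      (if (((p.1:ZMod ℓ) + s = (p.2:ZMod ℓ) + t) ∧ n p.1 - n (p.1+1) = 1 ∧
          n' p.2 - n' (p.2+1) = 1) then (1:ℤ) else 0)
      = ∑ D ∈ R2, ∑ p ∈ (R ×ˢ R).filter (fun p : ℤ × ℤ => p.1 - p.2 = D),
        (if (((p.1:ZMod ℓ) + s = (p.2:ZMod ℓ) + t) ∧ n p.1 - n (p.1+1) = 1 ∧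
            n' p.2 - n' (p.2+1) = 1) then (1:ℤ) else 0) :=
    (Finset.sum_fiberwise_of_maps_to hmaps _).symm
  have hT2 : ∑ p ∈ R ×ˢ R,
      (if (((p.1:ZMod ℓ) + s = (p.2:ZMod ℓ) + t) ∧ n p.1 - n (p.1+1) = -1 ∧
          n' p.2 - n' (p.2+1) = -1) then (1:ℤ) else 0)
      = ∑ D ∈ R2, ∑ p ∈ (R ×ˢ R).filter (fun p : ℤ × ℤ => p.1 - p.2 = D),
        (if (((p.1:ZMod ℓ) + s = (p.2:ZMod ℓ) + t) ∧ n p.1 - n (p.1+1) = -1 ∧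
            n' p.2 - n' (p.2+1) = -1) then (1:ℤ) else 0) :=
    (Finset.sum_fiberwise_of_maps_to hmaps _).symm
  have final1 : ∑ D ∈ R2, (if ((D:ZMod ℓ) + s = t) then n D else 0) = resCt ℓ M s n t := by
    rw [resCt]
    refine (Finset.sum_subset ?_ ?_).symm
    · rw [hR2]; apply Finset.Icc_subset_Icc <;> omega
    · intro x hx hnx
      simp only [hR2, Finset.mem_Icc] at hx hnx
      rw [hz x (by omega)]
      simp
  have final2 : ∑ D ∈ R2, (if ((D:ZMod ℓ) + s = t) then n' (-D) else 0) = resCt ℓ M t n' s := by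
    have e : ∑ D ∈ R2, (if ((D:ZMod ℓ) + s = t) then n' (-D) else 0)
        = ∑ m ∈ R2, (if ((m:ZMod ℓ) + t = s) then n' m else 0) := by
      refine Finset.sum_bij' (fun D _ => -D) (fun m _ => -m) ?_ ?_ ?_ ?_ ?_
      · intro a ha; simp only [hR2, Finset.mem_Icc] at ha ⊢; omega
      · intro a ha; simp only [hR2, Finset.mem_Icc] at ha ⊢; omega
      · intro a _; ring
      · intro a _; ring
      · intro a _
        refine if_congr ?_ rfl rfl
        push_cast
        constructor <;> intro h <;> linear_combination -h
    rw [e, resCt]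
    refine (Finset.sum_subset ?_ ?_).symm
    · rw [hR2]; apply Finset.Icc_subset_Icc <;> omega
    · intro x hx hnx
      simp only [hR2, Finset.mem_Icc] at hx hnx
      rw [hz' x (by omega)]
      simp
  calc ∑ i : ZMod ℓ, (resCt ℓ M s n i - resCt ℓ M s n (i+1)) *
      (resCt ℓ M t n' i - resCt ℓ M t n' (i+1))
      = ∑ p ∈ R ×ˢ R, (if ((p.1:ZMod ℓ) + s = (p.2:ZMod ℓ) + t)
          then (n p.1 - n (p.1+1)) * (n' p.2 - n' (p.2+1)) else 0) := by rw [lhs1, lhs2]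
    _ ≤ ∑ p ∈ R ×ˢ R,
        ((if (((p.1:ZMod ℓ) + s = (p.2:ZMod ℓ) + t) ∧ n p.1 - n (p.1+1) = 1 ∧
            n' p.2 - n' (p.2+1) = 1) then (1:ℤ) else 0)
          + (if (((p.1:ZMod ℓ) + s = (p.2:ZMod ℓ) + t) ∧ n p.1 - n (p.1+1) = -1 ∧
            n' p.2 - n' (p.2+1) = -1) then (1:ℤ) else 0)) := Finset.sum_le_sum ptw
    _ = (∑ p ∈ R ×ˢ R, (if (((p.1:ZMod ℓ) + s = (p.2:ZMod ℓ) + t) ∧ n p.1 - n (p.1+1) = 1 ∧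
            n' p.2 - n' (p.2+1) = 1) then (1:ℤ) else 0))
        + (∑ p ∈ R ×ˢ R, (if (((p.1:ZMod ℓ) + s = (p.2:ZMod ℓ) + t) ∧ n p.1 - n (p.1+1) = -1 ∧
            n' p.2 - n' (p.2+1) = -1) then (1:ℤ) else 0)) := Finset.sum_add_distrib
    _ ≤ (∑ D ∈ R2, (if ((D:ZMod ℓ) + s = t) then (if 0 ≤ D then n D else n' (-D)) else 0))
        + (∑ D ∈ R2, (if ((D:ZMod ℓ) + s = t) then (if 0 ≤ D then n' (-D) else n D) else 0)) := by
        rw [hT1, hT2]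
        exact add_le_add (Finset.sum_le_sum fiber1) (Finset.sum_le_sum fiber2)
    _ = (∑ D ∈ R2, (if ((D:ZMod ℓ) + s = t) then n D else 0))
        + (∑ D ∈ R2, (if ((D:ZMod ℓ) + s = t) then n' (-D) else 0)) := by
        rw [← Finset.sum_add_distrib, ← Finset.sum_add_distrib]
        refine Finset.sum_congr rfl fun D _ => ?_
        split_ifs <;> ring
    _ = resCt ℓ M s n t + resCt ℓ M t n' s := by rw [final1, final2]


lemma mRes_eq (ℓ : ℕ) [NeZero ℓ] {r : ℕ} (Λ : Fin r → ℕ → ℕ) (s : Fin r → ZMod ℓ) (N : ℕ)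
    (hN : ∀ c b, Λ c b < N) (hNz : ∀ c b, N ≤ b → Λ c b = 0) (i : ZMod ℓ) :
    mRes ℓ Λ s i = ∑ c : Fin r, resCt ℓ N (s c) (diagCt N (Λ c)) i := by
  classical
  set bigF : Finset (ℕ × ℕ × Fin r) :=
    (Finset.range N ×ˢ Finset.range N ×ˢ (Finset.univ : Finset (Fin r))).filter
      (fun q => q.1 < Λ q.2.2 q.2.1 ∧ (q.2.1 : ZMod ℓ) - (q.1 : ZMod ℓ) + s q.2.2 = i)
    with hbigF
  have hmem : ∀ a b : ℕ, ∀ c : Fin r, ((a, b, c) ∈ bigF ↔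
      (a < N ∧ b < N) ∧ a < Λ c b ∧ (b : ZMod ℓ) - (a : ZMod ℓ) + s c = i) := by
    intro a b c
    simp only [hbigF, Finset.mem_filter, Finset.mem_product, Finset.mem_range,
      Finset.mem_univ, and_true]
  have hset : mNodes Λ ∩ {q : ℕ × ℕ × Fin r | nodeRes ℓ (s q.2.2) (q.1, q.2.1) = i}
      = ↑bigF := by
    ext ⟨a, b, c⟩
    simp only [Set.mem_inter_iff, mNodes, Set.mem_setOf_eq, nodeRes, Finset.mem_coe, hmem]
    constructor
    · rintro ⟨h1, h2⟩
      have hb : b < N := by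
        by_contra hb
        push_neg at hb
        have := hNz c b hb
        omega
      have ha := hN c b
      exact ⟨⟨by omega, hb⟩, h1, h2⟩
    · tauto
  have h0 : mRes ℓ Λ s i = (bigF.card : ℤ) := by
    rw [mRes, hset, Set.ncard_coe_finset]
  have hfib : bigF.card = ∑ x ∈ (Finset.univ : Finset (Fin r)) ×ˢ Finset.Icc (-(N:ℤ)) (N:ℤ),
      (bigF.filter (fun q => (q.2.2, (q.2.1:ℤ) - (q.1:ℤ)) = x)).card := by
    apply Finset.card_eq_sum_card_fiberwise
    rintro ⟨a, b, c⟩ hq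
    rw [Finset.mem_coe, hmem] at hq
    simp only [Finset.mem_coe, Finset.mem_product, Finset.mem_univ, Finset.mem_Icc, true_and]
    omega
  have hfcard : ∀ x : Fin r × ℤ,
      x ∈ (Finset.univ : Finset (Fin r)) ×ˢ Finset.Icc (-(N:ℤ)) (N:ℤ) →
      ((bigF.filter (fun q => (q.2.2, (q.2.1:ℤ) - (q.1:ℤ)) = x)).card : ℤ)
      = (if ((x.2 : ZMod ℓ) + s x.1 = i) then diagCt N (Λ x.1) x.2 else 0) := by
    rintro ⟨c, k⟩ _
    have hmem2 : ∀ a b : ℕ, ∀ c' : Fin r,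
        ((a, b, c') ∈ bigF.filter (fun q => (q.2.2, (q.2.1:ℤ) - (q.1:ℤ)) = (c, k)) ↔
          ((a, b, c') ∈ bigF ∧ c' = c ∧ (b:ℤ) - (a:ℤ) = k)) := by
      intro a b c'
      simp only [Finset.mem_filter, Prod.mk.injEq]
    by_cases hres : ((k : ZMod ℓ) + s c = i)
    · have : (bigF.filter (fun q => (q.2.2, (q.2.1:ℤ) - (q.1:ℤ)) = (c, k))).card
          = (diagF N (Λ c) k).card := by
        apply Finset.card_bij (fun (q : ℕ × ℕ × Fin r) _ => (q.1, q.2.1))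
        · rintro ⟨a, b, c'⟩ hq
          rw [hmem2] at hq
          obtain ⟨hq1, rfl, hq3⟩ := hq
          rw [hmem] at hq1
          show (a, b) ∈ diagF N (Λ c') k
          rw [mem_diagF]
          exact ⟨hq1.1.1, hq1.1.2, hq1.2.1, hq3⟩
        · rintro ⟨a, b, c'⟩ hp ⟨a', b', c''⟩ hq hpq
          rw [hmem2] at hp hq
          have e1 : (a, b) = (a', b') := hpq
          simp only [Prod.mk.injEq] at e1 ⊢
          exact ⟨e1.1, e1.2, hp.2.1.trans hq.2.1.symm⟩
        · rintro ⟨a, b⟩ hp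
          rw [mem_diagF] at hp
          obtain ⟨h1, h2, h3, h4⟩ := hp
          refine ⟨(a, b, c), ?_, rfl⟩
          rw [hmem2]
          refine ⟨?_, rfl, h4⟩
          rw [hmem]
          refine ⟨⟨h1, h2⟩, h3, ?_⟩
          have hcast : ((b:ℤ) - (a:ℤ) : ℤ) = k := h4
          calc (b : ZMod ℓ) - (a : ZMod ℓ) + s c
              = (((b:ℤ) - (a:ℤ) : ℤ) : ZMod ℓ) + s c := by push_cast; ring
            _ = ((k : ℤ) : ZMod ℓ) + s c := by rw [hcast]
            _ = i := hres
      rw [if_pos hres, diagCt, this]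
    · rw [if_neg hres]
      have : (bigF.filter (fun q => (q.2.2, (q.2.1:ℤ) - (q.1:ℤ)) = (c, k))) = ∅ := by
        rw [Finset.eq_empty_iff_forall_notMem]
        rintro ⟨a, b, c'⟩ hq
        rw [hmem2] at hq
        obtain ⟨hq1, rfl, hq3⟩ := hq
        rw [hmem] at hq1
        apply hres
        calc ((k : ℤ) : ZMod ℓ) + s c' = (((b:ℤ) - (a:ℤ) : ℤ) : ZMod ℓ) + s c' := by rw [hq3]
          _ = (b : ZMod ℓ) - (a : ZMod ℓ) + s c' := by push_cast; ring
          _ = i := hq1.2.2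
      rw [this]
      simp
  rw [h0, hfib]
  rw [Nat.cast_sum]
  rw [Finset.sum_congr rfl hfcard]
  rw [Finset.sum_product]
  rfl

end Stmt9

/-- with `d = Res_ℓ(λ•,s)`, one has
`2 Σ_j d_{s_j} ≥ Σ_i (d_i - d_{i+1})²` and the right-hand sum is even, so the
weight `Ω_ℓ(λ•,s)` is a non-negative integer. -/
theorem stmt_9 (ℓ r : ℕ) [NeZero ℓ] (Λ : Fin r → ℕ → ℕ)
    (hΛ : ∀ c, IsPartition (Λ c)) (s : Fin r → ZMod ℓ) :
    (∑ i : ZMod ℓ, (mRes ℓ Λ s i - mRes ℓ Λ s (i + 1)) ^ 2) ≤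
        2 * ∑ j : Fin r, mRes ℓ Λ s (s j) ∧
      Even (∑ i : ZMod ℓ, (mRes ℓ Λ s i - mRes ℓ Λ s (i + 1)) ^ 2) := by
  classical
  open Stmt9 in
  choose Nf hNf using fun c => (hΛ c).2
  set N : ℕ := Finset.univ.sup (fun c => Nf c + Λ c 0 + 1) with hNdef
  have hN : ∀ c b, Λ c b < N := by
    intro c b
    have h1 : Λ c b ≤ Λ c 0 := (hΛ c).1 0 b (Nat.zero_le b)
    have h2 : Nf c + Λ c 0 + 1 ≤ N := by
      rw [hNdef]
      exact Finset.le_sup (f := fun c => Nf c + Λ c 0 + 1) (Finset.mem_univ c)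
    omega
  have hNz : ∀ c b, N ≤ b → Λ c b = 0 := by
    intro c b hb
    apply hNf c
    have h2 : Nf c + Λ c 0 + 1 ≤ N := by
      rw [hNdef]
      exact Finset.le_sup (f := fun c => Nf c + Λ c 0 + 1) (Finset.mem_univ c)
    omega
  have hres : ∀ i, mRes ℓ Λ s i = ∑ c : Fin r, Stmt9.resCt ℓ N (s c) (Stmt9.diagCt N (Λ c)) i :=
    fun i => Stmt9.mRes_eq ℓ Λ s N hN hNz i
  constructor
  · -- the inequality
    have hexp : ∑ i : ZMod ℓ, (mRes ℓ Λ s i - mRes ℓ Λ s (i+1)) ^ 2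
        = ∑ c : Fin r, ∑ c' : Fin r, ∑ i : ZMod ℓ,
            (Stmt9.resCt ℓ N (s c) (Stmt9.diagCt N (Λ c)) i -
              Stmt9.resCt ℓ N (s c) (Stmt9.diagCt N (Λ c)) (i+1)) *
            (Stmt9.resCt ℓ N (s c') (Stmt9.diagCt N (Λ c')) i -
              Stmt9.resCt ℓ N (s c') (Stmt9.diagCt N (Λ c')) (i+1)) := by
      calc ∑ i : ZMod ℓ, (mRes ℓ Λ s i - mRes ℓ Λ s (i+1)) ^ 2
          = ∑ i : ZMod ℓ, ∑ c : Fin r, ∑ c' : Fin r,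
              (Stmt9.resCt ℓ N (s c) (Stmt9.diagCt N (Λ c)) i -
                Stmt9.resCt ℓ N (s c) (Stmt9.diagCt N (Λ c)) (i+1)) *
              (Stmt9.resCt ℓ N (s c') (Stmt9.diagCt N (Λ c')) i -
                Stmt9.resCt ℓ N (s c') (Stmt9.diagCt N (Λ c')) (i+1)) := by
            refine Finset.sum_congr rfl fun i _ => ?_
            rw [hres i, hres (i+1), ← Finset.sum_sub_distrib, sq, Finset.sum_mul_sum]
        _ = _ := by
            rw [Finset.sum_comm]
            exact Finset.sum_congr rfl fun c _ => Finset.sum_comm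
    rw [hexp]
    have hkey : ∀ c c' : Fin r, ∑ i : ZMod ℓ,
        (Stmt9.resCt ℓ N (s c) (Stmt9.diagCt N (Λ c)) i -
          Stmt9.resCt ℓ N (s c) (Stmt9.diagCt N (Λ c)) (i+1)) *
        (Stmt9.resCt ℓ N (s c') (Stmt9.diagCt N (Λ c')) i -
          Stmt9.resCt ℓ N (s c') (Stmt9.diagCt N (Λ c')) (i+1))
        ≤ Stmt9.resCt ℓ N (s c) (Stmt9.diagCt N (Λ c)) (s c')
          + Stmt9.resCt ℓ N (s c') (Stmt9.diagCt N (Λ c')) (s c) := by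
      intro c c'
      exact Stmt9.key ℓ N (s c) (s c') (Stmt9.diagCt N (Λ c)) (Stmt9.diagCt N (Λ c'))
        (fun k => Stmt9.diagCt_nonneg) (fun k => Stmt9.diagCt_nonneg)
        (fun k hk => Stmt9.diagCt_zero hk) (fun k hk => Stmt9.diagCt_zero hk)
        (fun k hk => Stmt9.diagCt_A (hΛ c).1 hk) (fun k hk => Stmt9.diagCt_B (hΛ c).1 hk)
        (fun k hk => Stmt9.diagCt_A (hΛ c').1 hk) (fun k hk => Stmt9.diagCt_B (hΛ c').1 hk)
    calc ∑ c : Fin r, ∑ c' : Fin r, ∑ i : ZMod ℓ,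
        (Stmt9.resCt ℓ N (s c) (Stmt9.diagCt N (Λ c)) i -
          Stmt9.resCt ℓ N (s c) (Stmt9.diagCt N (Λ c)) (i+1)) *
        (Stmt9.resCt ℓ N (s c') (Stmt9.diagCt N (Λ c')) i -
          Stmt9.resCt ℓ N (s c') (Stmt9.diagCt N (Λ c')) (i+1))
        ≤ ∑ c : Fin r, ∑ c' : Fin r,
            (Stmt9.resCt ℓ N (s c) (Stmt9.diagCt N (Λ c)) (s c')
              + Stmt9.resCt ℓ N (s c') (Stmt9.diagCt N (Λ c')) (s c)) :=
          Finset.sum_le_sum (fun c _ => Finset.sum_le_sum (fun c' _ => hkey c c'))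
      _ = (∑ c : Fin r, ∑ c' : Fin r, Stmt9.resCt ℓ N (s c) (Stmt9.diagCt N (Λ c)) (s c'))
          + (∑ c : Fin r, ∑ c' : Fin r, Stmt9.resCt ℓ N (s c') (Stmt9.diagCt N (Λ c')) (s c)) := by
          rw [← Finset.sum_add_distrib]
          exact Finset.sum_congr rfl fun c _ => Finset.sum_add_distrib
      _ = 2 * ∑ j : Fin r, mRes ℓ Λ s (s j) := by
          have e1 : ∑ c : Fin r, ∑ c' : Fin r, Stmt9.resCt ℓ N (s c) (Stmt9.diagCt N (Λ c)) (s c')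
              = ∑ j : Fin r, mRes ℓ Λ s (s j) := by
            rw [Finset.sum_comm]
            exact Finset.sum_congr rfl fun j _ => (hres (s j)).symm
          have e2 : ∑ c : Fin r, ∑ c' : Fin r, Stmt9.resCt ℓ N (s c') (Stmt9.diagCt N (Λ c')) (s c)
              = ∑ j : Fin r, mRes ℓ Λ s (s j) :=
            Finset.sum_congr rfl fun j _ => (hres (s j)).symm
          rw [e1, e2]
          ring
  · -- evenness
    have hzero : ∑ i : ZMod ℓ, (mRes ℓ Λ s i - mRes ℓ Λ s (i+1)) = 0 := by
      rw [Finset.sum_sub_distrib]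
      have h : ∑ i : ZMod ℓ, mRes ℓ Λ s (i+1) = ∑ i : ZMod ℓ, mRes ℓ Λ s i :=
        Fintype.sum_equiv (Equiv.addRight (1 : ZMod ℓ)) _ _ (fun i => rfl)
      rw [h, sub_self]
    have hsplit : ∑ i : ZMod ℓ, (mRes ℓ Λ s i - mRes ℓ Λ s (i+1)) ^ 2
        = ∑ i : ZMod ℓ, ((mRes ℓ Λ s i - mRes ℓ Λ s (i+1)) ^ 2
            - (mRes ℓ Λ s i - mRes ℓ Λ s (i+1)))
          + ∑ i : ZMod ℓ, (mRes ℓ Λ s i - mRes ℓ Λ s (i+1)) := by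
      rw [← Finset.sum_add_distrib]
      exact Finset.sum_congr rfl fun i _ => by ring
    rw [hsplit, hzero, add_zero]
    apply Finset.even_sum
    intro i _
    have h : (mRes ℓ Λ s i - mRes ℓ Λ s (i+1)) ^ 2 - (mRes ℓ Λ s i - mRes ℓ Λ s (i+1))
        = (mRes ℓ Λ s i - mRes ℓ Λ s (i+1) - 1) * ((mRes ℓ Λ s i - mRes ℓ Λ s (i+1) - 1) + 1) := by
      ring
    rw [h]
    exact Int.even_mul_succ_self _
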